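/- Sub-additivity of IMCC (Lemma 2.1(iii)): Let E be a real vector space, let ρ^{FC} : E → ℝ be subadditive, and let ρ^{RS}, ρ^{RC} : E → ℝ be arbitrary functionals. Let X, Y : Fin 5 → E be rows such that (a) ρ^{FC}(X j + Y j) ≥ 0 for every j ∈ Fin 5, and (b) ES_{ρ^{RS}}(X+Y)/ES_{ρ^{RC}}(X+Y) ≤ ES_{ρ^{RS}}(X)/ES_{ρ^{RC}}(X) and ES_{ρ^{RS}}(X+Y)/ES_{ρ^{RC}}(X+Y) ≤ ES_{ρ^{RS}}(Y)/ES_{ρ^{RC}}(Y). Then IMCC(X+Y) ≤ IMCC(X) + IMCC(Y), where (X + Y) j = X j + Y j. -/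

import Mathlib

/-- FRTB expected shortfall of a row. -/
noncomputable def frtbES {E : Type*} (ρ : E → ℝ) (X : Fin 5 → E) : ℝ :=
  Real.sqrt (∑ j, (ρ (X j)) ^ 2)

/-- IMCC of a row, given the three expected-shortfall functionals. -/
noncomputable def rowIMCC {E : Type*} (ρRS ρRC ρFC : E → ℝ) (X : Fin 5 → E) : ℝ :=
  (frtbES ρRS X / frtbES ρRC X) * frtbES ρFC X

lemma l2_triangle (a b : Fin 5 → ℝ) :
    Real.sqrt (∑ j, (a j + b j) ^ 2) ≤
      Real.sqrt (∑ j, (a j) ^ 2) + Real.sqrt (∑ j, (b j) ^ 2) := by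
  have h := norm_add_le (E := EuclideanSpace ℝ (Fin 5)) (WithLp.toLp 2 a) (WithLp.toLp 2 b)
  simpa [EuclideanSpace.norm_eq, Real.norm_eq_abs, sq_abs] using h

lemma frtbES_nonneg {E : Type*} (ρ : E → ℝ) (X : Fin 5 → E) : 0 ≤ frtbES ρ X :=
  Real.sqrt_nonneg _

/-- Sub-additivity of IMCC (Lemma 2.1(iii)). -/
theorem imcc_subadditive {E : Type*} [AddCommGroup E] [Module ℝ E]
    (ρRS ρRC ρFC : E → ℝ)
    (hsubFC : ∀ x y : E, ρFC (x + y) ≤ ρFC x + ρFC y)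
    (X Y : Fin 5 → E)
    (hpos : ∀ j, 0 ≤ ρFC (X j + Y j))
    (hX : frtbES ρRS (fun j => X j + Y j) / frtbES ρRC (fun j => X j + Y j)
          ≤ frtbES ρRS X / frtbES ρRC X)
    (hY : frtbES ρRS (fun j => X j + Y j) / frtbES ρRC (fun j => X j + Y j)
          ≤ frtbES ρRS Y / frtbES ρRC Y) :
    rowIMCC ρRS ρRC ρFC (fun j => X j + Y j)
      ≤ rowIMCC ρRS ρRC ρFC X + rowIMCC ρRS ρRC ρFC Y := by
  set Z : Fin 5 → E := fun j => X j + Y j with hZ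
  set r := frtbES ρRS Z / frtbES ρRC Z with hr
  have hr0 : 0 ≤ r := div_nonneg (frtbES_nonneg _ _) (frtbES_nonneg _ _)
  have hES : frtbES ρFC Z ≤ frtbES ρFC X + frtbES ρFC Y := by
    calc frtbES ρFC Z ≤ Real.sqrt (∑ j, (ρFC (X j) + ρFC (Y j)) ^ 2) := by
          apply Real.sqrt_le_sqrt
          apply Finset.sum_le_sum
          intro j _
          exact pow_le_pow_left₀ (hpos j) (hsubFC (X j) (Y j)) 2
      _ ≤ _ := l2_triangle _ _
  calc rowIMCC ρRS ρRC ρFC Z = r * frtbES ρFC Z := rfl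
    _ ≤ r * frtbES ρFC X + r * frtbES ρFC Y := by
        rw [← mul_add]; exact mul_le_mul_of_nonneg_left hES hr0
    _ ≤ rowIMCC ρRS ρRC ρFC X + rowIMCC ρRS ρRC ρFC Y := by
        unfold rowIMCC
        have h1 : r * frtbES ρFC X ≤ (frtbES ρRS X / frtbES ρRC X) * frtbES ρFC X :=
          mul_le_mul_of_nonneg_right hX (frtbES_nonneg _ _)
        have h2 : r * frtbES ρFC Y ≤ (frtbES ρRS Y / frtbES ρRC Y) * frtbES ρFC Y :=
          mul_le_mul_of_nonneg_right hY (frtbES_nonneg _ _)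
        exact add_le_add h1 h2
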